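/- Let M = p_i^{n_i} p_j^{n_j} p_k^{n_k} with p_i, p_j, p_k distinct primes. Assume A ⊕ B = ℤ_M and |A| = p_i^{β_i} p_j^{β_j} p_k^{β_k}. Then for every x ∈ ℤ_M and every integer 0 ≤ α_i ≤ n_i one has |A ∩ Π(x, p_i^{n_i−α_i})| ≤ p_i^{α_i} p_j^{β_j} p_k^{β_k}. -/

import Mathlib

open Polynomial

/-- The mask polynomial `A(X) = Σ_{a ∈ A} X^a` of a finite subset of `ZMod M`,
using the representatives in `{0, …, M-1}`. -/
noncomputable def maskPoly (M : ℕ) (A : Finset (ZMod M)) : Polynomial ℤ :=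
  ∑ a ∈ A, X ^ a.val

/-- `Φ_s | A` : the `s`-th cyclotomic polynomial divides the mask polynomial of `A` in `ℤ[X]`. -/
def cycDvd (M s : ℕ) (A : Finset (ZMod M)) : Prop :=
  cyclotomic s ℤ ∣ maskPoly M A

/-- `A ⊕ B = ℤ_M` : every element of `ℤ_M` has a unique representation `a + b`
with `a ∈ A` and `b ∈ B`. -/
def IsTiling (M : ℕ) (A B : Set (ZMod M)) : Prop :=
  ∀ z : ZMod M, ∃! ab : ZMod M × ZMod M, ab.1 ∈ A ∧ ab.2 ∈ B ∧ ab.1 + ab.2 = z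

/-- The Coven–Meyerowitz property (T2): whenever `s_1, …, s_m` are prime powers dividing `M`,
powers of pairwise distinct primes, with `Φ_{s_t} | A` for each `t`, then `Φ_{s_1 ⋯ s_m} | A`. -/
def SatisfiesT2 (M : ℕ) (A : Finset (ZMod M)) : Prop :=
  ∀ (P : Finset ℕ) (e : ℕ → ℕ), P.Nonempty →
    (∀ p ∈ P, p.Prime ∧ 1 ≤ e p ∧ p ^ e p ∣ M ∧ cycDvd M (p ^ e p) A) →
    cycDvd M (∏ p ∈ P, p ^ e p) A

/-- The `D`-grid through `x` in `ZMod M` : `Λ(x, D) = {y : D ∣ y - x}`. -/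
def gridSet (M : ℕ) (x : ZMod M) (D : ℕ) : Set (ZMod M) :=
  {y : ZMod M | (D : ZMod M) ∣ (y - x)}

/-- `S` is fibered in the `p` direction on scale `M`: every element of `S` has its whole
fiber `Λ(s, M/p)` contained in `S`. -/
def Fibered (M p : ℕ) (S : Set (ZMod M)) : Prop :=
  ∀ s ∈ S, gridSet M s (M / p) ⊆ S

/-- `Div_N(S)` : the set of values `(s - s', N) = gcd(s - s', N)` for `s, s' ∈ S`. -/
def DivSet (M N : ℕ) (S : Set (ZMod M)) : Set ℕ :=
  {m : ℕ | ∃ s ∈ S, ∃ s' ∈ S, Nat.gcd (s - s').val N = m}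

lemma powModLemma {ζ : ℂ} {D : ℕ} (h : ζ ^ D = 1) (n : ℕ) : ζ ^ n = ζ ^ (n % D) := by
  conv_lhs => rw [← Nat.div_add_mod n D]
  rw [pow_add, pow_mul, h, one_pow, one_mul]

lemma geomZero {ζ : ℂ} {D : ℕ} (h1 : ζ ≠ 1) (h : ζ ^ D = 1) :
    ∑ j ∈ Finset.range D, ζ ^ j = 0 := by
  have hg := geom_sum_mul ζ D
  rw [h, sub_self] at hg
  rcases mul_eq_zero.mp hg with h' | h'
  · exact h'
  · exact absurd (sub_eq_zero.mp h') h1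

lemma sumSplit {β : Type*} [AddCommMonoid β] (p N : ℕ) (hp : 0 < p) (h : ℕ → β) :
    ∑ n ∈ Finset.range (p * N), h n
      = ∑ r ∈ Finset.range p, ∑ q ∈ Finset.range N, h (p * q + r) := by
  rw [← Finset.sum_product']
  refine Finset.sum_nbij' (fun n => (n % p, n / p)) (fun rq => p * rq.2 + rq.1) ?_ ?_ ?_ ?_ ?_
  · intro n hn
    simp only [Finset.mem_product, Finset.mem_range] at *
    exact ⟨Nat.mod_lt _ hp, (Nat.div_lt_iff_lt_mul hp).mpr (by rwa [mul_comm])⟩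
  · intro rq hrq
    simp only [Finset.mem_product, Finset.mem_range] at *
    calc p * rq.2 + rq.1 < p * rq.2 + p := by omega
    _ = p * (rq.2 + 1) := by ring
    _ ≤ p * N := Nat.mul_le_mul_left _ hrq.2
  · intro n hn; show p * (n / p) + n % p = n; rw [Nat.div_add_mod]
  · intro rq hrq
    simp only [Finset.mem_product, Finset.mem_range] at hrq
    obtain ⟨r, q⟩ := rq
    simp only [Nat.mul_add_mod, Nat.mod_eq_of_lt hrq.1]
    have : (p * q + r) / p = q := by
      rw [Nat.mul_add_div hp, Nat.div_eq_of_lt hrq.1, add_zero]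
    simp [this]
  · intro n hn; show h n = h (p * (n / p) + n % p); rw [Nat.div_add_mod]

lemma aevalPolyOf {D : ℕ} (f : ℕ → ℤ) (ζ : ℂ) :
    aeval ζ (∑ n ∈ Finset.range D, C (f n) * X ^ n) = ∑ n ∈ Finset.range D, (f n : ℂ) * ζ ^ n := by
  rw [map_sum]
  refine Finset.sum_congr rfl fun n _ => ?_
  simp

lemma evalOnePolyOf {D : ℕ} (f : ℕ → ℤ) :
    eval 1 (∑ n ∈ Finset.range D, C (f n) * X ^ n) = ∑ n ∈ Finset.range D, f n := by
  rw [eval_finset_sum]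
  refine Finset.sum_congr rfl fun n _ => ?_
  simp

lemma cyclotomicDvdOfAeval {f : Polynomial ℤ} {n : ℕ} (hn : 0 < n) {ζ : ℂ}
    (hζ : IsPrimitiveRoot ζ n) (hf : aeval ζ f = 0) : cyclotomic n ℤ ∣ f := by
  have h1 : cyclotomic n ℚ ∣ f.map (Int.castRingHom ℚ) := by
    rw [cyclotomic_eq_minpoly_rat hζ hn]
    apply minpoly.dvd
    rw [show (Int.castRingHom ℚ) = algebraMap ℤ ℚ from rfl, aeval_map_algebraMap]
    exact hf
  rwa [← map_cyclotomic_int n ℚ,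
    map_dvd_map (Int.castRingHom ℚ) (fun a b h => Int.cast_injective h)
      (cyclotomic.monic n ℤ)] at h1

lemma aevalEqZeroOfCyclotomicDvd {f : Polynomial ℤ} {n : ℕ} (hn : 0 < n) {ζ : ℂ}
    (hζ : IsPrimitiveRoot ζ n) (hf : cyclotomic n ℤ ∣ f) : aeval ζ f = 0 := by
  obtain ⟨g, rfl⟩ := hf
  have hroot : IsRoot (cyclotomic n ℂ) ζ := hζ.isRoot_cyclotomic hn
  have : aeval ζ (cyclotomic n ℤ) = 0 := by
    rw [aeval_def, eval₂_eq_eval_map, map_cyclotomic]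
    exact hroot
  rw [map_mul, this, zero_mul]

lemma primOfPowEq {p t : ℕ} (hp : p.Prime) (ht : 2 ≤ t) {η ζ : ℂ}
    (hη : IsPrimitiveRoot η (p ^ (t - 1))) (hζ : ζ ^ p = η) : IsPrimitiveRoot ζ (p ^ t) := by
  have hord : orderOf η = p ^ (t - 1) := hη.eq_orderOf.symm
  have hpt : p * p ^ (t - 1) = p ^ t := by
    rw [← pow_succ']
    congr 1
    omega
  have hfin : ζ ^ p ^ t = 1 := by
    have h1 : (ζ ^ p) ^ p ^ (t - 1) = 1 := by rw [hζ]; exact hη.pow_eq_one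
    rwa [← pow_mul, hpt] at h1
  have hdvd : orderOf ζ ∣ p ^ t := orderOf_dvd_of_pow_eq_one hfin
  obtain ⟨s, hs, hods⟩ := (Nat.dvd_prime_pow hp).mp hdvd
  have hop : orderOf (ζ ^ p) = orderOf ζ / Nat.gcd (orderOf ζ) p := orderOf_pow' ζ hp.pos.ne'
  rw [hζ, hord, hods] at hop
  have hst : s = t := by
    rcases Nat.eq_zero_or_pos s with h0 | hpos
    · subst h0
      simp [Nat.gcd_comm] at hop
      have : t - 1 = 0 := by
        by_contra hne
        have := Nat.one_lt_pow hne hp.one_lt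
        have := hp.one_lt; omega
      omega
    · have hg : Nat.gcd (p ^ s) p = p := by
        rw [Nat.gcd_comm]
        exact Nat.gcd_eq_left (dvd_pow_self p hpos.ne')
      rw [hg] at hop
      have hps : p ^ s = p * p ^ (s - 1) := by
        rw [← pow_succ']
        congr 1
        omega
      rw [hps, Nat.mul_div_cancel_left _ hp.pos] at hop
      have := Nat.pow_right_injective hp.two_le hop.symm
      omega
  have := IsPrimitiveRoot.orderOf ζ
  rwa [hods, hst] at this

/-- coefficient extraction for `∑ r' ∈ range p, C (F r') * X ^ r'` -/
lemma coeffSumCX (p : ℕ) (F : ℕ → ℂ) (r : ℕ) (hr : r < p) :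
    (∑ r' ∈ Finset.range p, C (F r') * X ^ r').coeff r = F r := by
  rw [finset_sum_coeff]
  rw [Finset.sum_eq_single r]
  · simp
  · intro b _ hb
    simp [coeff_X_pow, (Ne.symm hb)]
  · intro h
    exact absurd (Finset.mem_range.mpr hr) h

lemma natDegSumCX (p : ℕ) (hp : 0 < p) (F : ℕ → ℂ) :
    (∑ r' ∈ Finset.range p, C (F r') * X ^ r').natDegree < p := by
  have h : (∑ r' ∈ Finset.range p, C (F r') * X ^ r').natDegree ≤ p - 1 := by
    apply Polynomial.natDegree_sum_le_of_forall_le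
    intro r' hr'
    refine (natDegree_C_mul_le _ _).trans ?_
    rw [natDegree_X_pow]
    have := Finset.mem_range.mp hr'
    omega
  omega

lemma keyBound (p : ℕ) (hp : p.Prime) :
    ∀ (m : ℕ) (f : ℕ → ℤ), (∀ n, 0 ≤ f n) →
      ∀ S : Finset ℕ, (∀ t ∈ S, 1 ≤ t ∧ t ≤ m) →
      (∀ t ∈ S, ∀ ζ : ℂ, IsPrimitiveRoot ζ (p ^ t) →
        ∑ n ∈ Finset.range (p ^ m), (f n : ℂ) * ζ ^ n = 0) →
      ∀ n < p ^ m, (p : ℤ) ^ S.card * f n ≤ ∑ n ∈ Finset.range (p ^ m), f n := by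
  intro m
  induction m with
  | zero =>
    intro f hf S hS hvan n hn
    have hSe : S = ∅ := Finset.eq_empty_of_forall_notMem fun t ht => by
      have := hS t ht; omega
    subst hSe
    simp only [pow_zero] at hn ⊢
    interval_cases n
    simp [Finset.sum_range_one]
  | succ m ih =>
    intro f hf S hS hvan n hn
    have hp0 : 0 < p := hp.pos
    have hp1 : 1 < p := hp.one_lt
    have hsplitN : p ^ (m + 1) = p * p ^ m := by rw [pow_succ, mul_comm]
    -- Step A
    have stepA : ∀ t ∈ S, 2 ≤ t → ∀ η : ℂ, IsPrimitiveRoot η (p ^ (t - 1)) → ∀ r < p,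
        ∑ q ∈ Finset.range (p ^ m), (f (p * q + r) : ℂ) * η ^ q = 0 := by
      intro t htS ht2 η hη r hr
      obtain ⟨ζ, hζ⟩ := IsAlgClosed.exists_pow_nat_eq η hp0
      have hζprim : IsPrimitiveRoot ζ (p ^ t) := primOfPowEq hp ht2 hη hζ
      have hζne : ζ ≠ 0 := hζprim.ne_zero (pow_ne_zero t hp0.ne')
      set ω : ℂ := ζ ^ p ^ (t - 1) with hω
      have hptm : p ^ (t - 1) * p = p ^ t := by
        rw [← pow_succ]; congr 1; omega
      have hωprim : IsPrimitiveRoot ω p := by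
        refine hζprim.pow (pow_pos hp0 t) ?_
        omega
      set F : ℕ → ℂ := fun r' => ∑ q ∈ Finset.range (p ^ m), (f (p * q + r') : ℂ) * η ^ q with hF
      set P : Polynomial ℂ := ∑ r' ∈ Finset.range p, C (F r') * X ^ r' with hP
      have hroots : ∀ u ∈ Finset.range p, P.eval (ζ * ω ^ u) = 0 := by
        intro u hu
        have hpow : (ζ * ω ^ u) ^ p = η := by
          rw [mul_pow, hζ, ← pow_mul, ← pow_mul]
          have he : p ^ (t - 1) * (u * p) = p ^ t * u := by
            calc p ^ (t - 1) * (u * p) = p ^ (t - 1) * p * u := by ring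
            _ = p ^ t * u := by rw [hptm]
          have h1 : ζ ^ (p ^ (t - 1) * (u * p)) = 1 := by
            rw [he, pow_mul, hζprim.pow_eq_one, one_pow]
          rw [h1, mul_one]
        have hprim' : IsPrimitiveRoot (ζ * ω ^ u) (p ^ t) := primOfPowEq hp ht2 hη hpow
        have h0 := hvan t htS _ hprim'
        rw [hsplitN, sumSplit p (p ^ m) hp0] at h0
        have hterm : ∀ r' ∈ Finset.range p,
            ∑ q ∈ Finset.range (p ^ m), (f (p * q + r') : ℂ) * (ζ * ω ^ u) ^ (p * q + r')
              = F r' * (ζ * ω ^ u) ^ r' := by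
          intro r' _
          rw [hF]
          simp only
          rw [Finset.sum_mul]
          refine Finset.sum_congr rfl fun q _ => ?_
          rw [pow_add, pow_mul, hpow]
          ring
        rw [Finset.sum_congr rfl hterm] at h0
        rw [hP, eval_finset_sum]
        simpa using h0
      have hPzero : P = 0 := by
        refine Polynomial.eq_zero_of_natDegree_lt_card_of_eval_eq_zero' P
          ((Finset.range p).image (fun u => ζ * ω ^ u)) ?_ ?_
        · intro i hi
          obtain ⟨u, hu, rfl⟩ := Finset.mem_image.mp hi
          exact hroots u hu
        · have hcard : ((Finset.range p).image (fun u => ζ * ω ^ u)).card = p := by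
            rw [Finset.card_image_of_injOn, Finset.card_range]
            intro u hu v hv huv
            simp only [Finset.coe_range, Set.mem_Iio] at hu hv
            exact hωprim.pow_inj hu hv (mul_left_cancel₀ hζne huv)
          rw [hcard]
          exact natDegSumCX p hp0 F
      have : F r = 0 := by
        have h := congrArg (fun Q : Polynomial ℂ => Q.coeff r) hPzero
        simp only [coeff_zero] at h
        rwa [hP, coeffSumCX p F r hr] at h
      simpa [hF] using this
    -- Step B
    have stepB : 1 ∈ S → ∀ r < p,
        (p : ℤ) * (∑ q ∈ Finset.range (p ^ m), f (p * q + r))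
          = ∑ n ∈ Finset.range (p ^ (m + 1)), f n := by
      intro h1S r hr
      have hωprim : IsPrimitiveRoot (Complex.exp (2 * Real.pi * Complex.I / p)) p :=
        Complex.isPrimitiveRoot_exp p hp0.ne'
      set ω : ℂ := Complex.exp (2 * Real.pi * Complex.I / p) with hω
      set sC : ℂ := ∑ n ∈ Finset.range (p ^ (m + 1)), (f n : ℂ) with hsC
      set F : ℕ → ℂ := fun r' => ∑ q ∈ Finset.range (p ^ m), (f (p * q + r') : ℂ) with hF
      have hFsum : ∑ r' ∈ Finset.range p, F r' = sC := by
        rw [hsC, hsplitN, sumSplit p (p ^ m) hp0]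
      set P : Polynomial ℂ := ∑ r' ∈ Finset.range p, C (F r' - sC / p) * X ^ r' with hP
      have hpC : (p : ℂ) ≠ 0 := by exact_mod_cast hp0.ne'
      have hroots : ∀ u ∈ Finset.range p, P.eval (ω ^ u) = 0 := by
        intro u hu
        have hevalP : P.eval (ω ^ u)
            = ∑ r' ∈ Finset.range p, (F r' - sC / p) * (ω ^ u) ^ r' := by
          rw [hP, eval_finset_sum]
          simp
        rw [hevalP]
        have hsub : ∀ r' ∈ Finset.range p, (F r' - sC / p) * (ω ^ u) ^ r'
            = F r' * (ω ^ u) ^ r' - (sC / p) * (ω ^ u) ^ r' := by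
          intro r' _; ring
        rw [Finset.sum_congr rfl hsub, Finset.sum_sub_distrib]
        rcases Nat.eq_zero_or_pos u with hu0 | hupos
        · subst hu0
          simp only [pow_zero, one_pow, mul_one]
          rw [hFsum, Finset.sum_const, Finset.card_range, nsmul_eq_mul]
          field_simp
          ring
        · -- u ≥ 1 : ω^u is a primitive p-th root
          have humem := Finset.mem_range.mp hu
          have hucop : Nat.Coprime u p := by
            rw [Nat.coprime_comm]
            exact hp.coprime_iff_not_dvd.mpr
              (fun hdvd => absurd (Nat.le_of_dvd hupos hdvd) (by omega))
          have hprim' : IsPrimitiveRoot (ω ^ u) p := hωprim.pow_of_coprime u hucop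
          have h0 := hvan 1 h1S (ω ^ u) (by rwa [pow_one])
          rw [hsplitN, sumSplit p (p ^ m) hp0] at h0
          have hωp : (ω ^ u) ^ p = 1 := by
            rw [← pow_mul, mul_comm, pow_mul, hωprim.pow_eq_one, one_pow]
          have hterm : ∀ r' ∈ Finset.range p,
              ∑ q ∈ Finset.range (p ^ m), (f (p * q + r') : ℂ) * (ω ^ u) ^ (p * q + r')
                = F r' * (ω ^ u) ^ r' := by
            intro r' _
            rw [hF]
            simp only
            rw [Finset.sum_mul]
            refine Finset.sum_congr rfl fun q _ => ?_
            rw [pow_add, pow_mul, hωp, one_pow, one_mul]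
          rw [Finset.sum_congr rfl hterm] at h0
          rw [h0, zero_sub, neg_eq_zero, ← Finset.mul_sum]
          rw [geomZero (hprim'.ne_one hp1) hωp, mul_zero]
      have hPzero : P = 0 := by
        refine Polynomial.eq_zero_of_natDegree_lt_card_of_eval_eq_zero' P
          ((Finset.range p).image (fun u => ω ^ u)) ?_ ?_
        · intro i hi
          obtain ⟨u, hu, rfl⟩ := Finset.mem_image.mp hi
          exact hroots u hu
        · have hcard : ((Finset.range p).image (fun u => ω ^ u)).card = p := by
            rw [Finset.card_image_of_injOn, Finset.card_range]
            intro u hu v hv huv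
            simp only [Finset.coe_range, Set.mem_Iio] at hu hv
            exact hωprim.pow_inj hu hv huv
          rw [hcard]
          exact natDegSumCX p hp0 _
      have hFr : F r = sC / p := by
        have h := congrArg (fun Q : Polynomial ℂ => Q.coeff r) hPzero
        simp only [coeff_zero] at h
        rw [hP, coeffSumCX p _ r hr] at h
        have := sub_eq_zero.mp h
        exact this
      have hgoal : (p : ℂ) * F r = sC := by
        rw [hFr]
        field_simp
      have hFbeta : ∑ q ∈ Finset.range (p ^ m), (f (p * q + r) : ℂ) = F r := by
        rw [hF]
      have hZ : (((p : ℤ) * ∑ q ∈ Finset.range (p ^ m), f (p * q + r) : ℤ) : ℂ)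
          = ((∑ n ∈ Finset.range (p ^ (m + 1)), f n : ℤ) : ℂ) := by
        push_cast
        rw [hFbeta, ← hsC]
        exact hgoal
      exact_mod_cast hZ
    -- recursion setup
    set S' : Finset ℕ := (S.erase 1).image (fun t => t - 1) with hS'
    have hS'mem : ∀ t' ∈ S', 1 ≤ t' ∧ t' ≤ m := by
      intro t' ht'
      obtain ⟨t, htmem, rfl⟩ := Finset.mem_image.mp ht'
      have h1 := hS t (Finset.mem_of_mem_erase htmem)
      have h2 := Finset.ne_of_mem_erase htmem
      omega
    have hS'card : S'.card = (S.erase 1).card := by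
      rw [hS']
      apply Finset.card_image_of_injOn
      intro a ha b hb hab
      have ha1 := hS a (Finset.mem_of_mem_erase ha)
      have hb1 := hS b (Finset.mem_of_mem_erase hb)
      have ha2 := Finset.ne_of_mem_erase ha
      have hb2 := Finset.ne_of_mem_erase hb
      have hab' : a - 1 = b - 1 := by simpa using hab
      omega
    have hIH : ∀ r < p, ∀ q < p ^ m,
        (p : ℤ) ^ S'.card * f (p * q + r) ≤ ∑ q' ∈ Finset.range (p ^ m), f (p * q' + r) := by
      intro r hr q hq
      refine ih (fun q' => f (p * q' + r)) (fun q' => hf _) S' hS'mem ?_ q hq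
      intro t' ht' ζ hζ
      obtain ⟨t, htmem, rfl⟩ := Finset.mem_image.mp ht'
      have h1 := hS t (Finset.mem_of_mem_erase htmem)
      have h2 := Finset.ne_of_mem_erase htmem
      exact stepA t (Finset.mem_of_mem_erase htmem) (by omega) ζ hζ r hr
    -- conclude
    have hrp : n % p < p := Nat.mod_lt _ hp0
    have hqm : n / p < p ^ m := by
      rw [Nat.div_lt_iff_lt_mul hp0]
      rw [hsplitN] at hn
      rwa [mul_comm] at hn
    have hfn : f n = f (p * (n / p) + n % p) := by rw [Nat.div_add_mod]
    by_cases h1 : 1 ∈ S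
    · have hcards : S.card = S'.card + 1 := by
        rw [hS'card, Finset.card_erase_of_mem h1]
        have : 0 < S.card := Finset.card_pos.mpr ⟨1, h1⟩
        omega
      calc (p : ℤ) ^ S.card * f n
          = (p : ℤ) * ((p : ℤ) ^ S'.card * f (p * (n / p) + n % p)) := by
            rw [hcards, hfn, pow_succ]; ring
        _ ≤ (p : ℤ) * ∑ q' ∈ Finset.range (p ^ m), f (p * q' + n % p) := by
            apply mul_le_mul_of_nonneg_left (hIH _ hrp _ hqm) (by positivity)
        _ = ∑ n ∈ Finset.range (p ^ (m + 1)), f n := stepB h1 _ hrp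
    · have hcards : S.card = S'.card := by
        rw [hS'card, Finset.erase_eq_of_notMem h1]
      have hle : ∑ q' ∈ Finset.range (p ^ m), f (p * q' + n % p)
          ≤ ∑ n ∈ Finset.range (p ^ (m + 1)), f n := by
        rw [hsplitN, sumSplit p (p ^ m) hp0 f]
        refine Finset.single_le_sum (f := fun r' => ∑ q' ∈ Finset.range (p ^ m), f (p * q' + r'))
          ?_ (Finset.mem_range.mpr hrp)
        intro r' _
        exact Finset.sum_nonneg fun q' _ => hf _
      calc (p : ℤ) ^ S.card * f n = (p : ℤ) ^ S'.card * f (p * (n / p) + n % p) := by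
            rw [hcards, hfn]
        _ ≤ _ := le_trans (hIH _ hrp _ hqm) hle

/-- **Plane bound.** Let `M = p_i^{n_i} p_j^{n_j} p_k^{n_k}`, `A ⊕ B = ℤ_M`,
`|A| = p_i^{β_i} p_j^{β_j} p_k^{β_k}`. Then for every `x ∈ ℤ_M` and `0 ≤ α_i ≤ n_i`,
`|A ∩ Π(x, p_i^{n_i - α_i})| ≤ p_i^{α_i} p_j^{β_j} p_k^{β_k}`. -/
theorem statement5
    (pi pj pk : ℕ) (hpi : pi.Prime) (hpj : pj.Prime) (hpk : pk.Prime)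
    (hij : pi ≠ pj) (hik : pi ≠ pk) (hjk : pj ≠ pk)
    (ni nj nk : ℕ) (hni : 1 ≤ ni) (hnj : 1 ≤ nj) (hnk : 1 ≤ nk)
    (M : ℕ) (hM : M = pi ^ ni * pj ^ nj * pk ^ nk)
    (A B : Set (ZMod M)) (htile : IsTiling M A B)
    (bi bj bk : ℕ) (hcardA : A.ncard = pi ^ bi * pj ^ bj * pk ^ bk)
    (x : ZMod M) (ai : ℕ) (hai : ai ≤ ni) :
    (A ∩ gridSet M x (pi ^ (ni - ai))).ncard ≤ pi ^ ai * pj ^ bj * pk ^ bk := by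
  classical
  have hpi2 := hpi.two_le
  haveI : Fact pi.Prime := ⟨hpi⟩
  have hMpos : 0 < M := by
    rw [hM]
    exact Nat.mul_pos (Nat.mul_pos (pow_pos hpi.pos _) (pow_pos hpj.pos _)) (pow_pos hpk.pos _)
  haveI : NeZero M := ⟨hMpos.ne'⟩
  have hDpos : 0 < pi ^ (ni - ai) := pow_pos hpi.pos _
  haveI : NeZero (pi ^ (ni - ai)) := ⟨hDpos.ne'⟩
  have hDM : pi ^ (ni - ai) ∣ M := by
    rw [hM]
    exact dvd_mul_of_dvd_left (dvd_mul_of_dvd_left (pow_dvd_pow pi (Nat.sub_le ni ai)) _) _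
  set D : ℕ := pi ^ (ni - ai) with hD
  set φ : ZMod M →+* ZMod D := ZMod.castHom hDM (ZMod D) with hφ
  set A' : Finset (ZMod M) := (Set.toFinite A).toFinset with hA'
  set B' : Finset (ZMod M) := (Set.toFinite B).toFinset with hB'
  have hmemA : ∀ a, a ∈ A' ↔ a ∈ A := fun a => Set.Finite.mem_toFinset _
  have hmemB : ∀ b, b ∈ B' ↔ b ∈ B := fun b => Set.Finite.mem_toFinset _
  -- tiling bijection : cardinality
  have hinj : ∀ ab₁ ∈ A' ×ˢ B', ∀ ab₂ ∈ A' ×ˢ B',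
      ab₁.1 + ab₁.2 = ab₂.1 + ab₂.2 → ab₁ = ab₂ := by
    rintro ⟨a, b⟩ hab ⟨a', b'⟩ hab' h
    simp only [Finset.mem_product, hmemA, hmemB] at hab hab'
    obtain ⟨w, hw, huniq⟩ := htile (a + b)
    have e1 := huniq (a, b) ⟨hab.1, hab.2, rfl⟩
    have e2 := huniq (a', b') ⟨hab'.1, hab'.2, h.symm⟩
    rw [e1, e2]
  have hsurj : ∀ z : ZMod M, ∃ ab ∈ A' ×ˢ B', ab.1 + ab.2 = z := by
    intro z
    obtain ⟨⟨a, b⟩, ⟨ha, hb, hab⟩, -⟩ := htile z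
    exact ⟨(a, b), Finset.mem_product.mpr ⟨(hmemA a).mpr ha, (hmemB b).mpr hb⟩, hab⟩
  have hcardAB : A'.card * B'.card = M := by
    have h1 : (A' ×ˢ B').card = (Finset.univ : Finset (ZMod M)).card := by
      apply Finset.card_bij (fun ab _ => ab.1 + ab.2) (fun ab hab => Finset.mem_univ _) hinj
      intro z _
      obtain ⟨ab, hab, h⟩ := hsurj z
      exact ⟨ab, hab, h⟩
    rw [← Finset.card_product, h1, Finset.card_univ, ZMod.card]
  -- counting functions
  set fA : ℕ → ℤ := fun n => ((A'.filter (fun a => (φ a).val = n)).card : ℤ) with hfA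
  set fB : ℕ → ℤ := fun n => ((B'.filter (fun b => (φ b).val = n)).card : ℤ) with hfB
  set FP : Polynomial ℤ := ∑ n ∈ Finset.range D, C (fA n) * X ^ n with hFP
  set GP : Polynomial ℤ := ∑ n ∈ Finset.range D, C (fB n) * X ^ n with hGP
  -- fiberwise sums
  have hfiber : ∀ (S : Finset (ZMod M)) (h : ZMod M → ℂ) (g : ℂ → ℂ),
      (∀ s ∈ S, h s = g ((φ s).val : ℂ)) → True := fun _ _ _ _ => trivial
  have hfiberA : ∀ ζ : ℂ, ∑ n ∈ Finset.range D, (fA n : ℂ) * ζ ^ n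
      = ∑ a ∈ A', ζ ^ (φ a).val := by
    intro ζ
    rw [← Finset.sum_fiberwise_of_maps_to (g := fun a => (φ a).val) (t := Finset.range D)
      (fun a _ => Finset.mem_range.mpr (ZMod.val_lt _)) (fun a => ζ ^ (φ a).val)]
    refine Finset.sum_congr rfl fun n _ => ?_
    rw [hfA]
    push_cast
    rw [Finset.sum_congr rfl (fun a ha => by
      rw [(Finset.mem_filter.mp ha).2]), Finset.sum_const, nsmul_eq_mul]
  have hfiberB : ∀ ζ : ℂ, ∑ n ∈ Finset.range D, (fB n : ℂ) * ζ ^ n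
      = ∑ b ∈ B', ζ ^ (φ b).val := by
    intro ζ
    rw [← Finset.sum_fiberwise_of_maps_to (g := fun b => (φ b).val) (t := Finset.range D)
      (fun b _ => Finset.mem_range.mpr (ZMod.val_lt _)) (fun b => ζ ^ (φ b).val)]
    refine Finset.sum_congr rfl fun n _ => ?_
    rw [hfB]
    push_cast
    rw [Finset.sum_congr rfl (fun b hb => by
      rw [(Finset.mem_filter.mp hb).2]), Finset.sum_const, nsmul_eq_mul]
  have hsumA : ∑ n ∈ Finset.range D, fA n = (A'.card : ℤ) := by
    have hN : A'.card = ∑ n ∈ Finset.range D, (A'.filter (fun a => (φ a).val = n)).card :=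
      Finset.card_eq_sum_card_fiberwise (fun a _ => Finset.mem_range.mpr (ZMod.val_lt _))
    rw [hfA]
    beta_reduce
    exact_mod_cast hN.symm
  have hsumB : ∑ n ∈ Finset.range D, fB n = (B'.card : ℤ) := by
    have hN : B'.card = ∑ n ∈ Finset.range D, (B'.filter (fun b => (φ b).val = n)).card :=
      Finset.card_eq_sum_card_fiberwise (fun b _ => Finset.mem_range.mpr (ZMod.val_lt _))
    rw [hfB]
    beta_reduce
    exact_mod_cast hN.symm
  -- the tiling product identity
  have hprod0 : ∀ ζ : ℂ, ζ ≠ 1 → ζ ^ D = 1 → aeval ζ FP * aeval ζ GP = 0 := by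
    intro ζ hζ1 hζD
    have hζM : ζ ^ M = 1 := by
      obtain ⟨c, hc⟩ := hDM
      rw [hc, pow_mul, hζD, one_pow]
    rw [hFP, hGP, aevalPolyOf, aevalPolyOf, hfiberA, hfiberB, Finset.sum_mul_sum]
    have hterm : ∀ a ∈ A', ∀ b ∈ B',
        ζ ^ (φ a).val * ζ ^ (φ b).val = ζ ^ (φ (a + b)).val := by
      intro a _ b _
      rw [← pow_add, map_add]
      rw [powModLemma hζD ((φ a).val + (φ b).val), ← ZMod.val_add]
    calc ∑ a ∈ A', ∑ b ∈ B', ζ ^ (φ a).val * ζ ^ (φ b).val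
        = ∑ ab ∈ A' ×ˢ B', ζ ^ (φ (ab.1 + ab.2)).val := by
          rw [Finset.sum_product]
          exact Finset.sum_congr rfl fun a ha =>
            Finset.sum_congr rfl fun b hb => hterm a ha b hb
      _ = ∑ z : ZMod M, ζ ^ (φ z).val := by
          apply Finset.sum_bij (fun ab _ => ab.1 + ab.2) (fun ab hab => Finset.mem_univ _) hinj
          · intro z _
            obtain ⟨ab, hab, h⟩ := hsurj z
            exact ⟨ab, hab, h⟩
          · intro ab hab
            rfl
      _ = ∑ z : ZMod M, ζ ^ z.val := by
          refine Finset.sum_congr rfl fun z _ => ?_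
          have hv : (φ z).val = z.val % D := by
            rw [hφ, ZMod.castHom_apply, ← ZMod.natCast_val, ZMod.val_natCast]
          rw [hv, ← powModLemma hζD]
      _ = ∑ j ∈ Finset.range M, ζ ^ j := by
          apply Finset.sum_bij (fun z _ => z.val)
            (fun z _ => Finset.mem_range.mpr (ZMod.val_lt z))
          · intro z₁ _ z₂ _ h
            exact ZMod.val_injective M h
          · intro j hj
            exact ⟨(j : ZMod M), Finset.mem_univ _,
              ZMod.val_natCast_of_lt (Finset.mem_range.mp hj)⟩
          · intro z _
            rfl
      _ = 0 := geomZero hζ1 hζM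
  -- dvd dichotomy
  have hICC : ∀ t ∈ Finset.Icc 1 (ni - ai),
      cyclotomic (pi ^ t) ℤ ∣ FP ∨ cyclotomic (pi ^ t) ℤ ∣ GP := by
    intro t ht
    rw [Finset.mem_Icc] at ht
    have hpt : 0 < pi ^ t := pow_pos hpi.pos t
    have hprim := Complex.isPrimitiveRoot_exp (pi ^ t) hpt.ne'
    have hne1 : Complex.exp (2 * Real.pi * Complex.I / (pi ^ t : ℕ)) ≠ 1 :=
      hprim.ne_one (Nat.one_lt_pow (by omega) hpi.one_lt)
    have hpow : Complex.exp (2 * Real.pi * Complex.I / (pi ^ t : ℕ)) ^ D = 1 := by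
      obtain ⟨c, hc⟩ := pow_dvd_pow pi ht.2
      rw [hD]  -- ?
      rw [hc, pow_mul, hprim.pow_eq_one, one_pow]
    rcases mul_eq_zero.mp (hprod0 _ hne1 hpow) with h | h
    · exact Or.inl (cyclotomicDvdOfAeval hpt hprim h)
    · exact Or.inr (cyclotomicDvdOfAeval hpt hprim h)
  set SS : Finset ℕ := (Finset.Icc 1 (ni - ai)).filter
    (fun t => cyclotomic (pi ^ t) ℤ ∣ FP) with hSS
  set TT : Finset ℕ := (Finset.Icc 1 (ni - ai)).filter
    (fun t => ¬ cyclotomic (pi ^ t) ℤ ∣ FP) with hTT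
  have hTdvd : ∀ t ∈ TT, cyclotomic (pi ^ t) ℤ ∣ GP := by
    intro t ht
    rw [hTT, Finset.mem_filter] at ht
    rcases hICC t ht.1 with h | h
    · exact absurd h ht.2
    · exact h
  have hST : SS.card + TT.card = ni - ai := by
    rw [hSS, hTT, Finset.card_filter_add_card_filter_not, Nat.card_Icc]
    omega
  -- product of cyclotomics divides GP
  have hprodDvd : (∏ t ∈ TT, cyclotomic (pi ^ t) ℤ) ∣ GP := by
    have hmono : (∏ t ∈ TT, cyclotomic (pi ^ t) ℤ).Monic :=
      monic_prod_of_monic _ _ (fun t _ => cyclotomic.monic _ ℤ)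
    rw [← map_dvd_map (Int.castRingHom ℚ) (fun a b h => Int.cast_injective h) hmono,
      Polynomial.map_prod]
    have hmapc : ∀ t ∈ TT, (cyclotomic (pi ^ t) ℤ).map (Int.castRingHom ℚ)
        = cyclotomic (pi ^ t) ℚ := fun t _ => map_cyclotomic_int _ ℚ
    rw [Finset.prod_congr rfl hmapc]
    apply Finset.prod_dvd_of_coprime
    · intro a ha b hb hab
      exact cyclotomic.isCoprime_rat fun h => hab (Nat.pow_right_injective hpi2 h)
    · intro t ht
      rw [← map_cyclotomic_int]
      exact Polynomial.map_dvd _ (hTdvd t ht)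
  -- p^{|TT|} divides |B|
  have hTB : (pi : ℤ) ^ TT.card ∣ (B'.card : ℤ) := by
    have h1 : eval 1 (∏ t ∈ TT, cyclotomic (pi ^ t) ℤ) ∣ eval 1 GP := eval_dvd hprodDvd
    rw [eval_prod] at h1
    have h2 : ∀ t ∈ TT, eval 1 (cyclotomic (pi ^ t) ℤ) = (pi : ℤ) := by
      intro t ht
      have ht1 : 1 ≤ t := by
        have := (Finset.mem_Icc.mp (Finset.mem_filter.mp (hTT ▸ ht)).1).1
        omega
      rw [show t = (t - 1) + 1 by omega]
      exact eval_one_cyclotomic_prime_pow _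
    rw [Finset.prod_congr rfl h2, Finset.prod_const] at h1
    rw [hGP, evalOnePolyOf, hsumB] at h1
    simpa using h1
  have hTBn : pi ^ TT.card ∣ B'.card := by exact_mod_cast hTB
  -- card A'
  have hAcard : A'.card = pi ^ bi * pj ^ bj * pk ^ bk := by
    rw [← hcardA, hA']
    exact (Set.ncard_eq_toFinset_card A (Set.toFinite A)).symm
  -- TT.card + bi ≤ ni
  have hTb : TT.card + bi ≤ ni := by
    have hdvd2 : pi ^ (TT.card + bi) ∣ M := by
      rw [← hcardAB, pow_add, mul_comm A'.card B'.card]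
      refine mul_dvd_mul hTBn ?_
      rw [hAcard]
      exact dvd_mul_of_dvd_left (dvd_mul_of_dvd_left dvd_rfl _) _
    have hcop : Nat.Coprime (pi ^ (TT.card + bi)) (pj ^ nj * pk ^ nk) :=
      Nat.Coprime.pow_left _ (Nat.Coprime.mul_right
        (((Nat.coprime_primes hpi hpj).mpr hij).pow_right nj)
        (((Nat.coprime_primes hpi hpk).mpr hik).pow_right nk))
    have hdvd3 : pi ^ (TT.card + bi) ∣ pi ^ ni := by
      refine hcop.dvd_of_dvd_mul_right ?_
      rwa [hM, mul_assoc] at hdvd2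
    exact (Nat.pow_dvd_pow_iff_le_right hpi.one_lt).mp hdvd3
  have hfApos : ∀ n, 0 ≤ fA n := fun n => Int.natCast_nonneg _
  have hSSprop : ∀ t ∈ SS, (1 ≤ t ∧ t ≤ ni - ai) ∧ cyclotomic (pi ^ t) ℤ ∣ FP := by
    intro t ht
    rw [hSS, Finset.mem_filter] at ht
    exact ⟨Finset.mem_Icc.mp ht.1, ht.2⟩
  have hSSvan : ∀ t ∈ SS, ∀ ζ : ℂ, IsPrimitiveRoot ζ (pi ^ t) →
      ∑ n ∈ Finset.range (pi ^ (ni - ai)), (fA n : ℂ) * ζ ^ n = 0 := by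
    intro t ht ζ hζ
    have h0 := aevalEqZeroOfCyclotomicDvd (pow_pos hpi.pos t) hζ (hSSprop t ht).2
    rw [hFP, aevalPolyOf] at h0
    rw [← hD]
    exact h0
  have hkey := keyBound pi hpi (ni - ai) fA hfApos SS (fun t ht => (hSSprop t ht).1) hSSvan
  set n0 : ℕ := (φ x).val with hn0
  have hmain := hkey n0 (by rw [← hD]; exact ZMod.val_lt (φ x))
  rw [← hD, hsumA] at hmain
  -- identify the grid with the fiber
  have hdvd_iff : ∀ z : ZMod M, ((D : ℕ) : ZMod M) ∣ z ↔ φ z = 0 := by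
    intro z
    constructor
    · rintro ⟨w, rfl⟩
      rw [map_mul]
      have h5 : φ ((D : ℕ) : ZMod M) = 0 := by
        rw [map_natCast, ZMod.natCast_self]
      rw [h5, zero_mul]
    · intro h
      have h1 : ((z.val : ℕ) : ZMod D) = 0 := by
        rw [ZMod.natCast_val, ← ZMod.castHom_apply (h := hDM), ← hφ, h]
      have h2 : D ∣ z.val := (ZMod.natCast_eq_zero_iff _ _).mp h1
      obtain ⟨k, hk⟩ := h2
      have h3 : z = ((z.val : ℕ) : ZMod M) := (ZMod.natCast_zmod_val z).symm
      rw [h3, hk]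
      push_cast
      exact Dvd.intro _ rfl
  have hgrid : A ∩ gridSet M x D = ↑(A'.filter (fun a => (φ a).val = n0)) := by
    ext z
    simp only [Set.mem_inter_iff, gridSet, Set.mem_setOf_eq, Finset.coe_filter,
      Set.mem_setOf_eq]
    constructor
    · rintro ⟨hz, hdvd⟩
      refine ⟨(hmemA z).mpr hz, ?_⟩
      have h0 : φ (z - x) = 0 := (hdvd_iff _).mp hdvd
      rw [map_sub, sub_eq_zero] at h0
      rw [hn0, h0]
    · rintro ⟨hz, hval⟩
      refine ⟨(hmemA z).mp hz, ?_⟩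
      rw [hdvd_iff, map_sub, sub_eq_zero]
      apply ZMod.val_injective
      rw [hval, hn0]
  have hcount : (A ∩ gridSet M x D).ncard = (A'.filter (fun a => (φ a).val = n0)).card := by
    rw [hgrid, Set.ncard_coe_finset]
  -- final arithmetic
  have hSlow : bi ≤ ai + SS.card := by omega
  have hfinal : (pi : ℤ) ^ SS.card * fA n0 ≤ (pi : ℤ) ^ bi * ((pj : ℤ) ^ bj * (pk : ℤ) ^ bk) := by
    calc (pi : ℤ) ^ SS.card * fA n0 ≤ (A'.card : ℤ) := hmain
      _ = _ := by rw [hAcard]; push_cast; ring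
  have hkey2 : pi ^ SS.card * (A'.filter (fun a => (φ a).val = n0)).card
      ≤ pi ^ bi * (pj ^ bj * pk ^ bk) := by
    rw [hfA] at hfinal
    beta_reduce at hfinal
    exact_mod_cast hfinal
  rw [hcount]
  have hppos : 0 < pi ^ SS.card := pow_pos hpi.pos _
  refine Nat.le_of_mul_le_mul_left ?_ hppos
  calc pi ^ SS.card * (A'.filter (fun a => (φ a).val = n0)).card
      ≤ pi ^ bi * (pj ^ bj * pk ^ bk) := hkey2
    _ ≤ pi ^ (ai + SS.card) * (pj ^ bj * pk ^ bk) :=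
        Nat.mul_le_mul_right _ (Nat.pow_le_pow_right hpi.pos hSlow)
    _ = pi ^ SS.card * (pi ^ ai * pj ^ bj * pk ^ bk) := by ring
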